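/- Retraction error bound, orthographic case: let L ∈ ℝ^{n₁×n₂} have rank r with thin SVD L = UΣVᵀ, and let X lie in the tangent space T_L (i.e., X = UUᵀX + XVVᵀ − UUᵀXVVᵀ) with spectral norm ‖X‖ < σ_r(L). Then Uᵀ(L+X)V is invertible, and the orthographic retraction R⁽²⁾_L(X) = (L+X)V[Uᵀ(L+X)V]⁻¹Uᵀ(L+X) satisfies ‖R⁽²⁾_L(X) − (L + X)‖_F ≤ ‖X‖_F² / (2(σ_r(L) − ‖X‖)). -/

import Mathlib

open Matrix MeasureTheory ProbabilityTheory Filter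
open scoped BigOperators ENNReal NNReal

noncomputable section

namespace RPCA

variable {n₁ n₂ r : ℕ}

/-- Frobenius norm of a real matrix. -/
def frob (A : Matrix (Fin n₁) (Fin n₂) ℝ) : ℝ :=
  Real.sqrt (∑ i, ∑ j, (A i j) ^ 2)

/-- Frobenius inner product of two real matrices. -/
def finner (A B : Matrix (Fin n₁) (Fin n₂) ℝ) : ℝ :=
  ∑ i, ∑ j, A i j * B i j

/-- Spectral norm (operator norm) of a real matrix. -/
def spec (A : Matrix (Fin n₁) (Fin n₂) ℝ) : ℝ :=
  sSup {c | ∃ v : Fin n₂ → ℝ, (∑ j, (v j) ^ 2) = 1 ∧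
    c = Real.sqrt (∑ i, (∑ j, A i j * v j) ^ 2)}

/-- Smallest singular value of a square matrix. -/
def sigmaMin (A : Matrix (Fin r) (Fin r) ℝ) : ℝ :=
  sInf {c | ∃ v : Fin r → ℝ, (∑ k, (v k) ^ 2) = 1 ∧
    c = Real.sqrt (∑ i, (∑ k, A i k * v k) ^ 2)}

/-- The γ-th percentile (counting the fraction γ from the largest) of a multiset of reals. -/
def percentile (γ : ℝ) (s : Multiset ℝ) : ℝ :=
  (s.sort (· ≤ ·)).getD (s.card - ⌈γ * s.card⌉₊) 0

/-- Absolute values of the entries of row `i`. -/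
def rowAbs (A : Matrix (Fin n₁) (Fin n₂) ℝ) (i : Fin n₁) : Multiset ℝ :=
  (Finset.univ : Finset (Fin n₂)).val.map fun j => |A i j|

/-- Absolute values of the entries of column `j`. -/
def colAbs (A : Matrix (Fin n₁) (Fin n₂) ℝ) (j : Fin n₂) : Multiset ℝ :=
  (Finset.univ : Finset (Fin n₁)).val.map fun i => |A i j|

/-- The hard-thresholding operator `F_γ`: entries that are simultaneously above the γ-th
percentile of absolute values of their row and of their column are set to zero. -/
def hardThresh (γ : ℝ) (A : Matrix (Fin n₁) (Fin n₂) ℝ) : Matrix (Fin n₁) (Fin n₂) ℝ :=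
  Matrix.of fun i j =>
    if percentile γ (rowAbs A i) < |A i j| ∧ percentile γ (colAbs A j) < |A i j| then 0
    else A i j

/-- Absolute values of the observed entries of row `i`. -/
def rowAbsObs (Φ : Finset (Fin n₁ × Fin n₂)) (A : Matrix (Fin n₁) (Fin n₂) ℝ) (i : Fin n₁) :
    Multiset ℝ :=
  ((Φ.filter fun q => q.1 = i).val).map fun q => |A q.1 q.2|

/-- Absolute values of the observed entries of column `j`. -/
def colAbsObs (Φ : Finset (Fin n₁ × Fin n₂)) (A : Matrix (Fin n₁) (Fin n₂) ℝ) (j : Fin n₂) :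
    Multiset ℝ :=
  ((Φ.filter fun q => q.2 = j).val).map fun q => |A q.1 q.2|

/-- Partially observed thresholding operator `F̃_γ`: `F̃_ij A = A i j` if `|A i j|` exceeds the
γ-th percentile of absolute values of observed entries in both its row and its column,
and `0` otherwise. -/
def hardThreshObs (γ : ℝ) (Φ : Finset (Fin n₁ × Fin n₂)) (A : Matrix (Fin n₁) (Fin n₂) ℝ) :
    Matrix (Fin n₁) (Fin n₂) ℝ :=
  Matrix.of fun i j =>
    if percentile γ (rowAbsObs Φ A i) < |A i j| ∧ percentile γ (colAbsObs Φ A j) < |A i j| then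
      A i j
    else 0

/-- `P_Φ`: zero out the entries outside the observed set `Φ`. -/
def projObs (Φ : Finset (Fin n₁ × Fin n₂)) (A : Matrix (Fin n₁) (Fin n₂) ℝ) :
    Matrix (Fin n₁) (Fin n₂) ℝ :=
  Matrix.of fun i j => if (i, j) ∈ Φ then A i j else 0

/-- The sparsity class `S_{γ*}`: at most `γ* n₂` nonzero entries in each row and at most
`γ* n₁` nonzero entries in each column. -/
def SparseSet (γs : ℝ) (A : Matrix (Fin n₁) (Fin n₂) ℝ) : Prop :=
  (∀ i, (((Finset.univ : Finset (Fin n₂)).filter fun j => A i j ≠ 0).card : ℝ) ≤ γs * n₂) ∧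
  (∀ j, (((Finset.univ : Finset (Fin n₁)).filter fun i => A i j ≠ 0).card : ℝ) ≤ γs * n₁)

/-- Thin SVD `L = U (diagonal s) Vᵀ` with orthonormal `U, V` and positive decreasing
singular values `s`; this encodes that `L` has rank exactly `r`. -/
def IsThinSVD (L : Matrix (Fin n₁) (Fin n₂) ℝ) (U : Matrix (Fin n₁) (Fin r) ℝ)
    (s : Fin r → ℝ) (V : Matrix (Fin n₂) (Fin r) ℝ) : Prop :=
  Uᵀ * U = 1 ∧ Vᵀ * V = 1 ∧ Antitone s ∧ (∀ k, 0 < s k) ∧ L = U * Matrix.diagonal s * Vᵀ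

/-- μ-incoherence of the orthonormal SVD factors `U, V`: every row of `U` has Euclidean norm
at most `√(μ r / n₁)` and every row of `V` has Euclidean norm at most `√(μ r / n₂)`. -/
def Incoherent (μc : ℝ) (U : Matrix (Fin n₁) (Fin r) ℝ) (V : Matrix (Fin n₂) (Fin r) ℝ) :
    Prop :=
  (∀ i, Real.sqrt (∑ k, (U i k) ^ 2) ≤ Real.sqrt (μc * r / n₁)) ∧
  (∀ j, Real.sqrt (∑ k, (V j k) ^ 2) ≤ Real.sqrt (μc * r / n₂))

/-- Tangent-space projection `P_{T_X} D = UUᵀD + DVVᵀ − UUᵀDVVᵀ` at a rank-r point with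
orthonormal factors `U, V`. -/
def tangentProj (U : Matrix (Fin n₁) (Fin r) ℝ) (V : Matrix (Fin n₂) (Fin r) ℝ)
    (D : Matrix (Fin n₁) (Fin n₂) ℝ) : Matrix (Fin n₁) (Fin n₂) ℝ :=
  U * Uᵀ * D + D * (V * Vᵀ) - U * Uᵀ * D * (V * Vᵀ)

/-- `Z` is a best rank-r approximation of `M` in Frobenius norm. -/
def IsBestRankApprox (r : ℕ) (M Z : Matrix (Fin n₁) (Fin n₂) ℝ) : Prop :=
  Z.rank ≤ r ∧ ∀ W : Matrix (Fin n₁) (Fin n₂) ℝ, W.rank ≤ r → frob (M - Z) ≤ frob (M - W)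

/-- Orthographic retraction formula `M V (Uᵀ M V)⁻¹ Uᵀ M` where `M = X + δ`. -/
def orthoRetract (U : Matrix (Fin n₁) (Fin r) ℝ) (V : Matrix (Fin n₂) (Fin r) ℝ)
    (M : Matrix (Fin n₁) (Fin n₂) ℝ) : Matrix (Fin n₁) (Fin n₂) ℝ :=
  M * V * (Uᵀ * M * V)⁻¹ * (Uᵀ * M)

/-- `Lnext` is obtained from `Lk` by applying either the projective or the orthographic
retraction (for the rank-r manifold) to the tangent vector `δ` at `Lk`. -/
def IsRetractUpdate (r : ℕ) (Lk δ Lnext : Matrix (Fin n₁) (Fin n₂) ℝ) : Prop :=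
  IsBestRankApprox r (Lk + δ) Lnext ∨
  ∃ (U : Matrix (Fin n₁) (Fin r) ℝ) (s : Fin r → ℝ) (V : Matrix (Fin n₂) (Fin r) ℝ),
    IsThinSVD Lk U s V ∧ Lnext = orthoRetract U V (Lk + δ)

/-- One step of manifold gradient descent with the fully observed thresholded gradient:
`Lnext = R_{Lk}(−η P_{T_{Lk}} F_γ(Lk − Y))`. -/
def IsGradStep (γ η : ℝ) (r : ℕ) (Y Lk Lnext : Matrix (Fin n₁) (Fin n₂) ℝ) : Prop :=
  ∃ (U : Matrix (Fin n₁) (Fin r) ℝ) (s : Fin r → ℝ) (V : Matrix (Fin n₂) (Fin r) ℝ),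
    IsThinSVD Lk U s V ∧
    IsRetractUpdate r Lk (-(η • tangentProj U V (hardThresh γ (Lk - Y)))) Lnext

/-- One step of manifold gradient descent with the partially observed thresholded gradient:
`Lnext = R_{Lk}(−η P_{T_{Lk}} F̃_γ(Lk − Y))`. -/
def IsGradStepObs (γ η : ℝ) (r : ℕ) (Φ : Finset (Fin n₁ × Fin n₂))
    (Y Lk Lnext : Matrix (Fin n₁) (Fin n₂) ℝ) : Prop :=
  ∃ (U : Matrix (Fin n₁) (Fin r) ℝ) (s : Fin r → ℝ) (V : Matrix (Fin n₂) (Fin r) ℝ),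
    IsThinSVD Lk U s V ∧
    IsRetractUpdate r Lk (-(η • tangentProj U V (hardThreshObs γ Φ (Lk - Y)))) Lnext

end RPCA

namespace OrthoAux
open Matrix RPCA

variable {m n p q : ℕ}

def en {m : ℕ} (v : Fin m → ℝ) : ℝ := Real.sqrt (∑ i, v i ^ 2)

lemma en_nonneg (v : Fin m → ℝ) : 0 ≤ en v := Real.sqrt_nonneg _

lemma sq_en (v : Fin m → ℝ) : en v ^ 2 = ∑ i, v i ^ 2 :=
  Real.sq_sqrt (Finset.sum_nonneg fun _ _ => sq_nonneg _)

lemma en_smul (c : ℝ) (v : Fin m → ℝ) : en (c • v) = |c| * en v := by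
  unfold en
  rw [← Real.sqrt_sq_eq_abs, ← Real.sqrt_mul (sq_nonneg c)]
  congr 1
  rw [Finset.mul_sum]
  apply Finset.sum_congr rfl; intro i _
  simp [mul_pow, smul_eq_mul]

lemma inner_le_en_mul_en (a b : Fin m → ℝ) : ∑ i, a i * b i ≤ en a * en b := by
  have h := Finset.sum_mul_sq_le_sq_mul_sq Finset.univ a b
  have h2 : ∑ i, a i * b i ≤ |∑ i, a i * b i| := le_abs_self _
  refine h2.trans ?_
  rw [← Real.sqrt_sq_eq_abs]
  calc Real.sqrt ((∑ i, a i * b i) ^ 2) ≤ Real.sqrt ((∑ i, a i ^ 2) * ∑ i, b i ^ 2) :=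
        Real.sqrt_le_sqrt h
    _ = en a * en b := by
        rw [Real.sqrt_mul (Finset.sum_nonneg fun _ _ => sq_nonneg _)]; rfl

lemma en_add_le (a b : Fin m → ℝ) : en (a + b) ≤ en a + en b := by
  have hab := inner_le_en_mul_en a b
  have h1 := sq_en (a + b); have h2 := sq_en a; have h3 := sq_en b
  have hs : ∑ i, (a + b) i ^ 2 = (∑ i, a i ^ 2) + (∑ i, b i ^ 2) + 2 * ∑ i, a i * b i := by
    rw [Finset.mul_sum, ← Finset.sum_add_distrib, ← Finset.sum_add_distrib]
    apply Finset.sum_congr rfl; intro i _; simp [Pi.add_apply]; ring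
  have h4 : en (a+b) ^ 2 ≤ (en a + en b) ^ 2 := by
    rw [h1, hs]; nlinarith [en_nonneg a, en_nonneg b]
  exact le_of_sq_le_sq h4 (add_nonneg (en_nonneg a) (en_nonneg b))

lemma mulVec_apply (A : Matrix (Fin m) (Fin n) ℝ) (v : Fin n → ℝ) (i : Fin m) :
    A.mulVec v i = ∑ j, A i j * v j := by
  simp [Matrix.mulVec, dotProduct]

/-- The defining set of `spec`. -/
lemma spec_eq (A : Matrix (Fin m) (Fin n) ℝ) :
    spec A = sSup {c | ∃ v : Fin n → ℝ, (∑ j, (v j) ^ 2) = 1 ∧ c = en (A.mulVec v)} := by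
  unfold spec en
  congr 1

lemma frob_nonneg (A : Matrix (Fin m) (Fin n) ℝ) : 0 ≤ frob A := Real.sqrt_nonneg _

lemma sq_frob (A : Matrix (Fin m) (Fin n) ℝ) : frob A ^ 2 = ∑ i, ∑ j, A i j ^ 2 :=
  Real.sq_sqrt (Finset.sum_nonneg fun _ _ => Finset.sum_nonneg fun _ _ => sq_nonneg _)

lemma elem_le_frob (A : Matrix (Fin m) (Fin n) ℝ) (v : Fin n → ℝ)
    (hv : (∑ j, (v j) ^ 2) = 1) : en (A.mulVec v) ≤ frob A := by
  have h : ∑ i, (A.mulVec v i) ^ 2 ≤ ∑ i, ∑ j, A i j ^ 2 := by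
    apply Finset.sum_le_sum; intro i _
    rw [mulVec_apply]
    have := Finset.sum_mul_sq_le_sq_mul_sq Finset.univ (fun j => A i j) v
    rw [hv, mul_one] at this; exact this
  exact Real.sqrt_le_sqrt h

lemma spec_bddAbove (A : Matrix (Fin m) (Fin n) ℝ) :
    BddAbove {c | ∃ v : Fin n → ℝ, (∑ j, (v j) ^ 2) = 1 ∧ c = en (A.mulVec v)} := by
  refine ⟨frob A, ?_⟩
  rintro c ⟨v, hv, rfl⟩; exact elem_le_frob A v hv

lemma spec_nonneg (A : Matrix (Fin m) (Fin n) ℝ) : 0 ≤ spec A := by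
  rw [spec_eq]
  exact Real.sSup_nonneg (by rintro c ⟨v, hv, rfl⟩; exact en_nonneg _)

lemma en_mulVec_le (A : Matrix (Fin m) (Fin n) ℝ) (v : Fin n → ℝ) :
    en (A.mulVec v) ≤ spec A * en v := by
  by_cases hv : en v = 0
  · have hz : ∀ j, v j = 0 := by
      intro j
      have h0 : ∑ j, v j ^ 2 = 0 := by
        have := sq_en v; rw [hv] at this; simpa using this.symm
      have := (Finset.sum_eq_zero_iff_of_nonneg
        (fun j _ => sq_nonneg (v j))).mp h0 j (Finset.mem_univ j)
      exact (pow_eq_zero_iff two_ne_zero).mp this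
    have : v = 0 := funext hz
    subst this
    simp [hv, Matrix.mulVec_zero]
    have : en (0 : Fin m → ℝ) = 0 := by unfold en; simp
    rw [this]
  · have hpos : 0 < en v := lt_of_le_of_ne (en_nonneg v) (Ne.symm hv)
    set t := en v
    have hunit : ∑ j, (t⁻¹ • v) j ^ 2 = 1 := by
      have := sq_en (t⁻¹ • v)
      rw [en_smul, abs_of_nonneg (inv_nonneg.mpr hpos.le)] at this
      rw [← this]
      field_simp; rfl
    have hmem : en (A.mulVec (t⁻¹ • v)) ∈
        {c | ∃ w : Fin n → ℝ, (∑ j, (w j) ^ 2) = 1 ∧ c = en (A.mulVec w)} :=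
      ⟨t⁻¹ • v, hunit, rfl⟩
    have hle : en (A.mulVec (t⁻¹ • v)) ≤ spec A := by
      rw [spec_eq]; exact le_csSup (spec_bddAbove A) hmem
    have hsc : en (A.mulVec (t⁻¹ • v)) = t⁻¹ * en (A.mulVec v) := by
      rw [Matrix.mulVec_smul, en_smul, abs_of_nonneg (inv_nonneg.mpr hpos.le)]
    rw [hsc] at hle
    calc en (A.mulVec v) = t * (t⁻¹ * en (A.mulVec v)) := by field_simp
      _ ≤ t * spec A := by apply mul_le_mul_of_nonneg_left hle hpos.le
      _ = spec A * t := mul_comm _ _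

lemma spec_le_frob (A : Matrix (Fin m) (Fin n) ℝ) : spec A ≤ frob A := by
  rw [spec_eq]
  exact Real.sSup_le (by rintro c ⟨v, hv, rfl⟩; exact elem_le_frob A v hv) (frob_nonneg A)

lemma en_zero : en (0 : Fin m → ℝ) = 0 := by unfold en; simp

lemma en_eq_zero {v : Fin m → ℝ} (h : en v = 0) : v = 0 := by
  funext j
  have h0 : ∑ i, v i ^ 2 = 0 := by
    have := sq_en v; rw [h] at this; simpa using this.symm
  have := (Finset.sum_eq_zero_iff_of_nonneg
    (fun i _ => sq_nonneg (v i))).mp h0 j (Finset.mem_univ j)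
  exact (pow_eq_zero_iff two_ne_zero).mp this

lemma en_neg (v : Fin m → ℝ) : en (-v) = en v := by
  have := en_smul (-1 : ℝ) v; simpa using this

lemma dot_self (v : Fin m → ℝ) : v ⬝ᵥ v = ∑ i, v i ^ 2 := by
  simp [dotProduct, sq]

lemma isometry_dot {W : Matrix (Fin m) (Fin n) ℝ} (hW : Wᵀ * W = 1) (u : Fin n → ℝ) :
    (W *ᵥ u) ⬝ᵥ (W *ᵥ u) = u ⬝ᵥ u := by
  rw [Matrix.dotProduct_mulVec, ← Matrix.mulVec_transpose, Matrix.mulVec_mulVec, hW,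
    Matrix.one_mulVec]

lemma sum_sq_mulVec {W : Matrix (Fin m) (Fin n) ℝ} (hW : Wᵀ * W = 1) (u : Fin n → ℝ) :
    ∑ i, (W *ᵥ u) i ^ 2 = ∑ k, u k ^ 2 := by
  have := isometry_dot hW u
  rwa [dot_self, dot_self] at this

lemma en_mulVec_orth {W : Matrix (Fin m) (Fin n) ℝ} (hW : Wᵀ * W = 1) (u : Fin n → ℝ) :
    en (W *ᵥ u) = en u := by
  unfold en; rw [sum_sq_mulVec hW]

lemma sum_sub_sq (a b : Fin m → ℝ) :
    ∑ i, (a i - b i) ^ 2 = (∑ i, a i ^ 2) - 2 * (∑ i, a i * b i) + ∑ i, b i ^ 2 := by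
  rw [Finset.mul_sum, ← Finset.sum_sub_distrib, ← Finset.sum_add_distrib]
  apply Finset.sum_congr rfl; intro i _; ring

lemma en_transpose_mulVec_le {W : Matrix (Fin m) (Fin n) ℝ} (hW : Wᵀ * W = 1)
    (w : Fin m → ℝ) : en (Wᵀ *ᵥ w) ≤ en w := by
  set u := Wᵀ *ᵥ w with hu
  have h1 : ∑ i, w i * (W *ᵥ u) i = ∑ k, u k ^ 2 := by
    have : w ⬝ᵥ (W *ᵥ u) = u ⬝ᵥ u := by
      rw [Matrix.dotProduct_mulVec, ← Matrix.mulVec_transpose, ← hu]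
    rw [dot_self] at this
    simpa [dotProduct] using this
  have h2 : ∑ i, (W *ᵥ u) i ^ 2 = ∑ k, u k ^ 2 := sum_sq_mulVec hW u
  have h3 : 0 ≤ ∑ i, (w i - (W *ᵥ u) i) ^ 2 :=
    Finset.sum_nonneg fun _ _ => sq_nonneg _
  rw [sum_sub_sq] at h3
  have h4 : ∑ k, u k ^ 2 ≤ ∑ i, w i ^ 2 := by linarith
  exact Real.sqrt_le_sqrt h4

lemma frob_transpose (A : Matrix (Fin m) (Fin n) ℝ) : frob Aᵀ = frob A := by
  unfold frob; rw [Finset.sum_comm]; simp [Matrix.transpose_apply]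

lemma frob_orthL {W : Matrix (Fin m) (Fin p) ℝ} (hW : Wᵀ * W = 1)
    (N : Matrix (Fin p) (Fin n) ℝ) : frob (W * N) = frob N := by
  unfold frob
  congr 1
  calc ∑ i, ∑ j, (W * N) i j ^ 2 = ∑ j, ∑ i, (W * N) i j ^ 2 := Finset.sum_comm
    _ = ∑ j, ∑ k, N k j ^ 2 := by
        apply Finset.sum_congr rfl; intro j _
        have h := sum_sq_mulVec hW (fun k => N k j)
        rw [← h]
        apply Finset.sum_congr rfl; intro i _
        congr 1
    _ = ∑ k, ∑ j, N k j ^ 2 := Finset.sum_comm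

lemma frob_orthR {W : Matrix (Fin n) (Fin p) ℝ} (hW : Wᵀ * W = 1)
    (N : Matrix (Fin m) (Fin n) ℝ) : frob (N * (W * Wᵀ)) = frob (N * W) := by
  have h1 : frob (N * (W * Wᵀ)) = frob ((N * (W * Wᵀ))ᵀ) := (frob_transpose _).symm
  rw [h1]
  have h2 : (N * (W * Wᵀ))ᵀ = W * (Wᵀ * Nᵀ) := by
    simp [Matrix.transpose_mul, Matrix.mul_assoc]
  rw [h2, frob_orthL hW]
  have h3 : Wᵀ * Nᵀ = (N * W)ᵀ := by simp [Matrix.transpose_mul]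
  rw [h3, frob_transpose]

lemma frob_mul_le (A : Matrix (Fin m) (Fin n) ℝ) (B : Matrix (Fin n) (Fin p) ℝ) :
    frob (A * B) ≤ spec A * frob B := by
  have key : ∑ i, ∑ j, (A * B) i j ^ 2 ≤ (spec A * frob B) ^ 2 := by
    rw [Finset.sum_comm]
    have h1 : ∀ j, ∑ i, (A * B) i j ^ 2 = en (A *ᵥ fun k => B k j) ^ 2 := by
      intro j; rw [sq_en]
      apply Finset.sum_congr rfl; intro i _
      congr 1
    have h2 : ∀ j, en (A *ᵥ fun k => B k j) ^ 2 ≤ spec A ^ 2 * ∑ k, B k j ^ 2 := by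
      intro j
      have := en_mulVec_le A (fun k => B k j)
      have hsq : en (A *ᵥ fun k => B k j) ^ 2 ≤ (spec A * en fun k => B k j) ^ 2 := by
        apply sq_le_sq' _ this
        have := en_nonneg (A *ᵥ fun k => B k j)
        nlinarith [mul_nonneg (spec_nonneg A) (en_nonneg (fun k => B k j))]
      calc en (A *ᵥ fun k => B k j) ^ 2 ≤ (spec A * en fun k => B k j) ^ 2 := hsq
        _ = spec A ^ 2 * ∑ k, B k j ^ 2 := by rw [mul_pow, sq_en]
    calc ∑ j, ∑ i, (A * B) i j ^ 2 = ∑ j, en (A *ᵥ fun k => B k j) ^ 2 := by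
          exact Finset.sum_congr rfl fun j _ => h1 j
      _ ≤ ∑ j, spec A ^ 2 * ∑ k, B k j ^ 2 := Finset.sum_le_sum fun j _ => h2 j
      _ = spec A ^ 2 * ∑ j, ∑ k, B k j ^ 2 := by rw [Finset.mul_sum]
      _ = (spec A * frob B) ^ 2 := by
          rw [mul_pow, sq_frob, Finset.sum_comm]
  have h0 : frob (A * B) ^ 2 ≤ (spec A * frob B) ^ 2 := by rw [sq_frob]; exact key
  exact le_of_sq_le_sq h0 (mul_nonneg (spec_nonneg A) (frob_nonneg B))

lemma cross_zero_rowT {A B : Matrix (Fin m) (Fin n) ℝ} (h : A * Bᵀ = 0) :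
    ∑ i, ∑ j, A i j * B i j = 0 := by
  have : ∀ i, ∑ j, A i j * B i j = (A * Bᵀ) i i := by
    intro i; simp [Matrix.mul_apply, Matrix.transpose_apply]
  calc ∑ i, ∑ j, A i j * B i j = ∑ i : Fin m, (A * Bᵀ) i i := by
        exact Finset.sum_congr rfl fun i _ => this i
    _ = 0 := by rw [h]; simp

lemma cross_zero_colT {A B : Matrix (Fin m) (Fin n) ℝ} (h : Aᵀ * B = 0) :
    ∑ i, ∑ j, A i j * B i j = 0 := by
  have : ∀ j, ∑ i, A i j * B i j = (Aᵀ * B) j j := by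
    intro j; simp [Matrix.mul_apply, Matrix.transpose_apply]
  calc ∑ i, ∑ j, A i j * B i j = ∑ j, ∑ i, A i j * B i j := Finset.sum_comm
    _ = ∑ j : Fin n, (Aᵀ * B) j j := Finset.sum_congr rfl fun j _ => this j
    _ = 0 := by rw [h]; simp

lemma pythag {A B : Matrix (Fin m) (Fin n) ℝ} (h : ∑ i, ∑ j, A i j * B i j = 0) :
    frob (A + B) ^ 2 = frob A ^ 2 + frob B ^ 2 := by
  rw [sq_frob, sq_frob, sq_frob]
  have expand : ∑ i, ∑ j, (A + B) i j ^ 2 =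
      (∑ i, ∑ j, A i j ^ 2) + (∑ i, ∑ j, B i j ^ 2) + 2 * ∑ i, ∑ j, A i j * B i j := by
    rw [Finset.mul_sum, ← Finset.sum_add_distrib, ← Finset.sum_add_distrib]
    apply Finset.sum_congr rfl; intro i _
    rw [Finset.mul_sum, ← Finset.sum_add_distrib, ← Finset.sum_add_distrib]
    apply Finset.sum_congr rfl; intro j _
    simp [Matrix.add_apply]; ring
  rw [expand, h]; ring

lemma en_diag_lower {s : Fin r → ℝ} {σ : ℝ} (hσ : 0 ≤ σ) (hs : ∀ k, σ ≤ s k)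
    (v : Fin r → ℝ) : σ * en v ≤ en ((Matrix.diagonal s) *ᵥ v) := by
  have h1 : σ ^ 2 * ∑ k, v k ^ 2 ≤ ∑ k, ((Matrix.diagonal s) *ᵥ v) k ^ 2 := by
    rw [Finset.mul_sum]
    apply Finset.sum_le_sum; intro k _
    have hdk : ((Matrix.diagonal s) *ᵥ v) k = s k * v k := Matrix.mulVec_diagonal s v k
    rw [hdk, mul_pow]
    apply mul_le_mul_of_nonneg_right _ (sq_nonneg _)
    exact pow_le_pow_left₀ hσ (hs k) 2
  have h2 : σ * en v = Real.sqrt (σ ^ 2 * ∑ k, v k ^ 2) := by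
    rw [Real.sqrt_mul (sq_nonneg σ), Real.sqrt_sq hσ]; rfl
  rw [h2]
  exact Real.sqrt_le_sqrt h1

end OrthoAux


set_option maxHeartbeats 2000000

/-- retraction error bound, orthographic case. -/
theorem orthographic_retraction_bound
    {n₁ n₂ r : ℕ} (hr : 0 < r)
    (L X : Matrix (Fin n₁) (Fin n₂) ℝ)
    (U : Matrix (Fin n₁) (Fin r) ℝ) (s : Fin r → ℝ) (V : Matrix (Fin n₂) (Fin r) ℝ)
    (hSVD : RPCA.IsThinSVD L U s V)
    (hTan : X = RPCA.tangentProj U V X)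
    (hXnorm : RPCA.spec X < s ⟨r - 1, Nat.sub_lt hr Nat.one_pos⟩) :
    IsUnit (Uᵀ * (L + X) * V) ∧
    RPCA.frob (RPCA.orthoRetract U V (L + X) - (L + X)) ≤
      RPCA.frob X ^ 2 /
        (2 * (s ⟨r - 1, Nat.sub_lt hr Nat.one_pos⟩ - RPCA.spec X)) := by
  open OrthoAux in
  obtain ⟨hU, hV, hanti, hpos, hL⟩ := hSVD
  set σ : ℝ := s ⟨r - 1, Nat.sub_lt hr Nat.one_pos⟩ with hσdef
  set c : ℝ := σ - RPCA.spec X with hcdef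
  have hc : 0 < c := sub_pos.mpr hXnorm
  set D : Matrix (Fin r) (Fin r) ℝ := Matrix.diagonal s with hD
  -- cancellation helpers
  have hUc : ∀ (k : ℕ) (Y : Matrix (Fin r) (Fin k) ℝ), Uᵀ * (U * Y) = Y := by
    intro k Y; rw [← Matrix.mul_assoc, hU, Matrix.one_mul]
  have hVc : ∀ (k : ℕ) (Y : Matrix (Fin r) (Fin k) ℝ), Vᵀ * (V * Y) = Y := by
    intro k Y; rw [← Matrix.mul_assoc, hV, Matrix.one_mul]
  have fUL : Uᵀ * L = D * Vᵀ := by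
    rw [hL, Matrix.mul_assoc U D Vᵀ]; exact hUc _ _
  have fLV : L * V = U * D := by
    rw [hL, Matrix.mul_assoc (U * D) Vᵀ V, hV, Matrix.mul_one]
  have fULU : U * (Uᵀ * L) = L := by rw [fUL, hL, Matrix.mul_assoc]
  have fLVV : L * (V * Vᵀ) = L := by rw [← Matrix.mul_assoc, fLV, ← hL]
  have hX' : X = U * (Uᵀ * X) + X * (V * Vᵀ) - U * (Uᵀ * (X * (V * Vᵀ))) := by
    have h := hTan
    unfold RPCA.tangentProj at h
    simpa only [Matrix.mul_assoc] using h
  -- amalgamated tangent identity for M = L + X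
  have hM' : L + X = U * (Uᵀ * (L + X)) + (L + X) * (V * Vᵀ)
      - U * (Uᵀ * ((L + X) * (V * Vᵀ))) := by
    have e1 : U * (Uᵀ * (L + X)) = L + U * (Uᵀ * X) := by
      rw [Matrix.mul_add, Matrix.mul_add, fULU]
    have e2 : (L + X) * (V * Vᵀ) = L + X * (V * Vᵀ) := by
      rw [Matrix.add_mul, fLVV]
    have e3 : U * (Uᵀ * ((L + X) * (V * Vᵀ))) = L + U * (Uᵀ * (X * (V * Vᵀ))) := by
      rw [e2, Matrix.mul_add, Matrix.mul_add, fULU]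
    rw [e1, e3, e2]
    conv_lhs => rw [hX']
    abel
  -- the r×r matrix and its invertibility
  have hAmat : Uᵀ * (L + X) * V = D + Uᵀ * X * V := by
    rw [Matrix.mul_add, Matrix.add_mul, fUL, Matrix.mul_assoc D Vᵀ V, hV, Matrix.mul_one]
  have hlow : ∀ v : Fin r → ℝ, c * en v ≤ en ((Uᵀ * (L + X) * V) *ᵥ v) := by
    intro v
    have hsk : ∀ k, σ ≤ s k := by
      intro k
      apply hanti
      have : k.val ≤ r - 1 := Nat.le_sub_one_of_lt k.isLt
      exact this
    have h1 : σ * en v ≤ en (D *ᵥ v) := en_diag_lower (hpos _).le hsk v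
    have hEv : en ((Uᵀ * X * V) *ᵥ v) ≤ RPCA.spec X * en v := by
      have e : (Uᵀ * X * V) *ᵥ v = Uᵀ *ᵥ (X *ᵥ (V *ᵥ v)) := by
        rw [← Matrix.mulVec_mulVec, ← Matrix.mulVec_mulVec]
      rw [e]
      calc en (Uᵀ *ᵥ (X *ᵥ (V *ᵥ v))) ≤ en (X *ᵥ (V *ᵥ v)) :=
            en_transpose_mulVec_le hU _
        _ ≤ RPCA.spec X * en (V *ᵥ v) := en_mulVec_le X _
        _ = RPCA.spec X * en v := by rw [en_mulVec_orth hV]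
    have hDv : D *ᵥ v = (Uᵀ * (L + X) * V) *ᵥ v - (Uᵀ * X * V) *ᵥ v := by
      rw [← Matrix.sub_mulVec, hAmat, add_sub_cancel_right]
    have tri : en (D *ᵥ v) ≤ en ((Uᵀ * (L + X) * V) *ᵥ v) + en ((Uᵀ * X * V) *ᵥ v) := by
      rw [hDv, sub_eq_add_neg]
      refine (en_add_le _ _).trans ?_
      rw [en_neg]
    have hXn := spec_nonneg X
    have henv := en_nonneg v
    rw [hcdef]
    linarith
  have hdet : IsUnit (Uᵀ * (L + X) * V) := by
    rw [Matrix.isUnit_iff_isUnit_det, isUnit_iff_ne_zero]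
    intro h0
    obtain ⟨v, hvne, hv0⟩ := (Matrix.exists_mulVec_eq_zero_iff).mpr h0
    have hlv := hlow v
    rw [hv0, en_zero] at hlv
    have hvnz : en v ≠ 0 := fun h => hvne (en_eq_zero h)
    have henv : 0 < en v := lt_of_le_of_ne (en_nonneg v) (Ne.symm hvnz)
    nlinarith
  refine ⟨hdet, ?_⟩
  have hdetU : IsUnit (Uᵀ * (L + X) * V).det := (Matrix.isUnit_iff_isUnit_det _).mp hdet
  have hAG : (Uᵀ * (L + X) * V) * (Uᵀ * (L + X) * V)⁻¹ = 1 := Matrix.mul_nonsing_inv _ hdetU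
  have hGA : (Uᵀ * (L + X) * V)⁻¹ * (Uᵀ * (L + X) * V) = 1 := Matrix.nonsing_inv_mul _ hdetU
  set G : Matrix (Fin r) (Fin r) ℝ := (Uᵀ * (L + X) * V)⁻¹ with hGdef
  -- spectral bound on G
  have hspecG : RPCA.spec G ≤ 1 / c := by
    rw [spec_eq]
    apply Real.sSup_le _ (by positivity)
    rintro x ⟨v, hv, rfl⟩
    have hv1 : en v = 1 := by unfold OrthoAux.en; rw [hv]; exact Real.sqrt_one
    have h2 := hlow (G *ᵥ v)
    have h3 : (Uᵀ * (L + X) * V) *ᵥ (G *ᵥ v) = v := by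
      rw [Matrix.mulVec_mulVec, hAG, Matrix.one_mulVec]
    rw [h3, hv1] at h2
    rw [le_div_iff₀ hc]
    linarith [en_nonneg (G *ᵥ v)]
  -- cancellation helpers involving G
  have hGc : ∀ (k : ℕ) (Y : Matrix (Fin r) (Fin k) ℝ),
      G * (Uᵀ * ((L + X) * (V * Y))) = Y := by
    intro k Y
    have e : Uᵀ * ((L + X) * (V * Y)) = (Uᵀ * (L + X) * V) * Y := by
      simp only [Matrix.mul_assoc]
    rw [e, ← Matrix.mul_assoc, hGA, Matrix.one_mul]
  have hAc : ∀ (k : ℕ) (Y : Matrix (Fin r) (Fin k) ℝ),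
      Uᵀ * ((L + X) * (V * (G * Y))) = Y := by
    intro k Y
    have e : Uᵀ * ((L + X) * (V * (G * Y))) = (Uᵀ * (L + X) * V) * (G * Y) := by
      simp only [Matrix.mul_assoc]
    rw [e, ← Matrix.mul_assoc, hAG, Matrix.one_mul]
  -- key algebraic identity
  have hkey : RPCA.orthoRetract U V (L + X) - (L + X) =
      ((L + X) * V - U * (Uᵀ * ((L + X) * V))) *
        (G * (Uᵀ * (L + X) - Uᵀ * ((L + X) * (V * Vᵀ)))) := by
    unfold RPCA.orthoRetract
    rw [← hGdef]
    simp only [Matrix.mul_sub, Matrix.sub_mul, Matrix.mul_assoc, hGc, hAc]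
    apply eq_of_sub_eq_zero
    have hsub : (U * (Uᵀ * (L + X)) + (L + X) * (V * Vᵀ)
        - U * (Uᵀ * ((L + X) * (V * Vᵀ)))) - (L + X) = 0 := by
      rw [← hM']; simp
    calc (L + X) * (V * (G * (Uᵀ * (L + X)))) - (L + X) -
        ((L + X) * (V * (G * (Uᵀ * (L + X)))) - U * (Uᵀ * (L + X))
          - ((L + X) * (V * Vᵀ) - U * (Uᵀ * ((L + X) * (V * Vᵀ)))))
        = U * (Uᵀ * (L + X)) + (L + X) * (V * Vᵀ)
            - U * (Uᵀ * ((L + X) * (V * Vᵀ))) - (L + X) := by abel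
      _ = 0 := hsub
  -- rewrite the two factors in terms of X
  have hCeq : (L + X) * V - U * (Uᵀ * ((L + X) * V)) = (X - U * (Uᵀ * X)) * V := by
    simp only [Matrix.add_mul, Matrix.mul_add, Matrix.sub_mul, Matrix.mul_assoc, fLV, hUc]
    abel
  have hBeq : Uᵀ * (L + X) - Uᵀ * ((L + X) * (V * Vᵀ)) = Uᵀ * (X - X * (V * Vᵀ)) := by
    simp only [Matrix.mul_add, Matrix.add_mul, Matrix.mul_sub, fLVV]
    abel
  have hB2 : U * (Uᵀ * (X - X * (V * Vᵀ))) = X - X * (V * Vᵀ) := by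
    rw [Matrix.mul_sub, Matrix.mul_sub]
    have hsub2 : U * (Uᵀ * X) + X * (V * Vᵀ) - U * (Uᵀ * (X * (V * Vᵀ))) - X = 0 := by
      rw [← hX']; simp
    apply eq_of_sub_eq_zero
    calc U * (Uᵀ * X) - U * (Uᵀ * (X * (V * Vᵀ))) - (X - X * (V * Vᵀ))
        = U * (Uᵀ * X) + X * (V * Vᵀ) - U * (Uᵀ * (X * (V * Vᵀ))) - X := by abel
      _ = 0 := hsub2
  have hfB : RPCA.frob (Uᵀ * (X - X * (V * Vᵀ))) = RPCA.frob (X - X * (V * Vᵀ)) := by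
    rw [← frob_orthL hU (Uᵀ * (X - X * (V * Vᵀ))), hB2]
  have hfC : RPCA.frob ((X - U * (Uᵀ * X)) * V)
      = RPCA.frob (X * (V * Vᵀ) - U * (Uᵀ * (X * (V * Vᵀ)))) := by
    rw [← frob_orthR hV (X - U * (Uᵀ * X))]
    congr 1
    simp only [Matrix.sub_mul, Matrix.mul_assoc]
  have cross1 : ∑ i, ∑ j, (X * (V * Vᵀ)) i j * (X - X * (V * Vᵀ)) i j = 0 := by
    apply cross_zero_rowT
    simp only [Matrix.transpose_sub, Matrix.transpose_mul, Matrix.transpose_transpose,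
      Matrix.mul_sub, Matrix.sub_mul, Matrix.mul_assoc, hVc, sub_self]
  have split1 : RPCA.frob X ^ 2
      = RPCA.frob (X * (V * Vᵀ)) ^ 2 + RPCA.frob (X - X * (V * Vᵀ)) ^ 2 := by
    have hx : X * (V * Vᵀ) + (X - X * (V * Vᵀ)) = X := by abel
    calc RPCA.frob X ^ 2
        = RPCA.frob (X * (V * Vᵀ) + (X - X * (V * Vᵀ))) ^ 2 := by rw [hx]
      _ = _ := pythag cross1
  have cross2 : ∑ i, ∑ j, (U * (Uᵀ * (X * (V * Vᵀ)))) i j *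
      (X * (V * Vᵀ) - U * (Uᵀ * (X * (V * Vᵀ)))) i j = 0 := by
    apply cross_zero_colT
    simp only [Matrix.transpose_mul, Matrix.transpose_transpose, Matrix.mul_sub,
      Matrix.sub_mul, Matrix.mul_assoc, hUc, sub_self]
  have split2 : RPCA.frob (X * (V * Vᵀ)) ^ 2
      = RPCA.frob (U * (Uᵀ * (X * (V * Vᵀ)))) ^ 2
        + RPCA.frob (X * (V * Vᵀ) - U * (Uᵀ * (X * (V * Vᵀ)))) ^ 2 := by
    have hx : U * (Uᵀ * (X * (V * Vᵀ)))
        + (X * (V * Vᵀ) - U * (Uᵀ * (X * (V * Vᵀ)))) = X * (V * Vᵀ) := by abel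
    calc RPCA.frob (X * (V * Vᵀ)) ^ 2
        = RPCA.frob (U * (Uᵀ * (X * (V * Vᵀ)))
            + (X * (V * Vᵀ) - U * (Uᵀ * (X * (V * Vᵀ))))) ^ 2 := by rw [hx]
      _ = _ := pythag cross2
  rw [hkey, hCeq, hBeq]
  set CC : Matrix (Fin n₁) (Fin r) ℝ := (X - U * (Uᵀ * X)) * V with hCC
  set BB : Matrix (Fin r) (Fin n₂) ℝ := Uᵀ * (X - X * (V * Vᵀ)) with hBB
  have t1 : RPCA.frob (CC * (G * BB)) ≤ RPCA.spec CC * RPCA.frob (G * BB) := frob_mul_le _ _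
  have t2 : RPCA.frob (G * BB) ≤ RPCA.spec G * RPCA.frob BB := frob_mul_le _ _
  have t3 : RPCA.spec CC ≤ RPCA.frob CC := spec_le_frob _
  have hab : RPCA.frob CC ^ 2 + RPCA.frob BB ^ 2 ≤ RPCA.frob X ^ 2 := by
    rw [hCC, hBB, hfC, hfB]
    have := sq_nonneg (RPCA.frob (U * (Uᵀ * (X * (V * Vᵀ)))))
    linarith [split1, split2]
  have h2ab : RPCA.frob CC * RPCA.frob BB * 2 ≤ RPCA.frob X ^ 2 := by
    nlinarith [sq_nonneg (RPCA.frob CC - RPCA.frob BB)]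
  have h5 : RPCA.frob CC * RPCA.frob BB ≤ RPCA.frob X ^ 2 / 2 := by linarith
  calc RPCA.frob (CC * (G * BB))
      ≤ RPCA.spec CC * RPCA.frob (G * BB) := t1
    _ ≤ RPCA.spec CC * (RPCA.spec G * RPCA.frob BB) :=
        mul_le_mul_of_nonneg_left t2 (spec_nonneg _)
    _ ≤ RPCA.frob CC * ((1 / c) * RPCA.frob BB) := by
        apply mul_le_mul t3 (mul_le_mul_of_nonneg_right hspecG (frob_nonneg _))
          (mul_nonneg (spec_nonneg _) (frob_nonneg _)) (frob_nonneg _)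
    _ = (RPCA.frob CC * RPCA.frob BB) * (1 / c) := by ring
    _ ≤ (RPCA.frob X ^ 2 / 2) * (1 / c) :=
        mul_le_mul_of_nonneg_right h5 (by positivity)
    _ = RPCA.frob X ^ 2 / (2 * c) := by
        have hcne : c ≠ 0 := ne_of_gt hc
        field_simp
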